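/- Let n ≥ 2 and k_1, …, k_n ≥ 3 be integers, let b = lcm(k_1−1, …, k_n−1), and fix an index i with 1 ≤ i ≤ n. If there exists an index j ≠ i such that (k_i−1) divides (k_j−1), then the class of the divisor ε_i in the critical group K(H_{k_1−1,…,k_n−1}) has additive order exactly (k_i−1)·(b + ∑_{l=1}^n b/(k_l−1)). -/

import Mathlib

/-- Vertex set of the hinge graph `H_{k₁-1,…,kₙ-1}` with base cycles of lengths `k i`:
two shared vertices `u, w` (encoded as `Sum.inl 0`, `Sum.inl 1`) together with the vertices
`v_{i,j}` (encoded as `Sum.inr ⟨i, j⟩`, zero-indexed, `j < k i - 2`). -/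
abbrev GHingeVertex (n : ℕ) (k : Fin n → ℕ) : Type := Fin 2 ⊕ (Σ i : Fin n, Fin (k i - 2))

/-- The shared vertex `u`. -/
def gu (n : ℕ) (k : Fin n → ℕ) : GHingeVertex n k := Sum.inl 0

/-- The shared vertex `w`. -/
def gw (n : ℕ) (k : Fin n → ℕ) : GHingeVertex n k := Sum.inl 1

/-- The vertex `v_{i+1,j+1}` of the `i+1`-st cycle (zero-indexed here). -/
def gv (n : ℕ) (k : Fin n → ℕ) (i : Fin n) (j : Fin (k i - 2)) : GHingeVertex n k :=
  Sum.inr ⟨i, j⟩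

/-- The base (Boolean) edge relation of the hinge graph: `u-w`, `u-v_{i,1}`,
`v_{i,j}-v_{i,j+1}`, `v_{i,k_i-2}-w`. -/
def gHingeRelB (n : ℕ) (k : Fin n → ℕ) : GHingeVertex n k → GHingeVertex n k → Bool
  | Sum.inl a, Sum.inl b => a != b
  | Sum.inl a, Sum.inr p => a == 0 && p.2.val == 0
  | Sum.inr p, Sum.inl b => b == 1 && p.2.val == k p.1 - 3
  | Sum.inr p, Sum.inr q => p.1 == q.1 && q.2.val == p.2.val + 1

/-- The hinge graph `H_{k₁-1,…,kₙ-1}`: cycles of lengths `k 1, …, k n` glued along the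
common edge `{u, w}`. -/
def GHinge (n : ℕ) (k : Fin n → ℕ) : SimpleGraph (GHingeVertex n k) :=
  SimpleGraph.fromRel (fun x y => gHingeRelB n k x y = true)

instance (n : ℕ) (k : Fin n → ℕ) : DecidableRel (GHinge n k).Adj := fun x y =>
  inferInstanceAs (Decidable (x ≠ y ∧ (gHingeRelB n k x y = true ∨ gHingeRelB n k y x = true)))

/-- The number of spanning trees of a graph `G`: the number of edge sets `s ⊆ E(G)`
whose associated spanning subgraph (on all of `V`) is connected and acyclic. -/
noncomputable def spanningTreeCount {V : Type*} (G : SimpleGraph V) : ℕ :=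
  Set.ncard {s : Set (Sym2 V) | s ⊆ G.edgeSet ∧ (SimpleGraph.fromEdgeSet s).IsTree}

/-- The degree homomorphism on divisors. -/
def degHom (V : Type*) [Fintype V] : (V → ℤ) →+ ℤ where
  toFun D := ∑ v, D v
  map_zero' := by simp
  map_add' x y := by simp [Finset.sum_add_distrib]

/-- The group `Div⁰` of degree-zero divisors. -/
def Div0 (V : Type*) [Fintype V] : AddSubgroup (V → ℤ) := (degHom V).ker

/-- The group of principal divisors: the image of the Laplacian `L = Deg - A`. -/
def Prin {V : Type*} [Fintype V] [DecidableEq V] (G : SimpleGraph V) [DecidableRel G.Adj] :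
    AddSubgroup (V → ℤ) :=
  AddMonoidHom.range (Matrix.mulVecLin (G.lapMatrix ℤ)).toAddMonoidHom

/-- The critical group `K(G) = Div⁰(G) / Prin(G)`. -/
def CriticalGroup {V : Type*} [Fintype V] [DecidableEq V] (G : SimpleGraph V)
    [DecidableRel G.Adj] : Type _ :=
  Div0 V ⧸ ((Prin G).addSubgroupOf (Div0 V))

noncomputable instance {V : Type*} [Fintype V] [DecidableEq V] (G : SimpleGraph V)
    [DecidableRel G.Adj] : AddCommGroup (CriticalGroup G) :=
  inferInstanceAs (AddCommGroup (Div0 V ⧸ ((Prin G).addSubgroupOf (Div0 V))))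

/-- The class of a degree-zero divisor in the critical group. -/
def divisorClass {V : Type*} [Fintype V] [DecidableEq V] (G : SimpleGraph V)
    [DecidableRel G.Adj] (D : V → ℤ) (hD : D ∈ Div0 V) : CriticalGroup G :=
  (QuotientAddGroup.mk (⟨D, hD⟩ : Div0 V) :
    Div0 V ⧸ ((Prin G).addSubgroupOf (Div0 V)))

/-- The divisor with value `1` at `x`, `-1` at `y` (for `x ≠ y`) and `0` elsewhere. -/
def pointDiff {V : Type*} [DecidableEq V] (x y : V) : V → ℤ :=
  fun z => (if z = x then 1 else 0) - (if z = y then 1 else 0)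

lemma pointDiff_mem {V : Type*} [Fintype V] [DecidableEq V] (x y : V) :
    pointDiff x y ∈ Div0 V := by
  simp [Div0, AddMonoidHom.mem_ker, degHom, pointDiff, Finset.sum_sub_distrib]

section HingeAux
open Matrix

variable {n : ℕ} {k : Fin n → ℕ}

lemma ghinge_adj_iff (x y : GHingeVertex n k) :
    (GHinge n k).Adj x y ↔
      x ≠ y ∧ (gHingeRelB n k x y = true ∨ gHingeRelB n k y x = true) := by
  simp [GHinge, SimpleGraph.fromRel_adj]

lemma relB_lr (a : Fin 2) (p : Σ m : Fin n, Fin (k m - 2)) :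
    gHingeRelB n k (Sum.inl a) (Sum.inr p) = (a == 0 && (p.2.val == 0)) := rfl

lemma relB_rl (a : Fin 2) (p : Σ m : Fin n, Fin (k m - 2)) :
    gHingeRelB n k (Sum.inr p) (Sum.inl a) = (a == 1 && (p.2.val == k p.1 - 3)) := rfl

lemma relB_rr (p q : Σ m : Fin n, Fin (k m - 2)) :
    gHingeRelB n k (Sum.inr p) (Sum.inr q) = (p.1 == q.1 && (q.2.val == p.2.val + 1)) := rfl

lemma adj_u_w : (GHinge n k).Adj (gu n k) (gw n k) := by
  rw [ghinge_adj_iff]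
  exact ⟨by simp [gu, gw], Or.inl rfl⟩

lemma adj_u_v (l : Fin n) (j : Fin (k l - 2)) :
    (GHinge n k).Adj (gu n k) (Sum.inr ⟨l, j⟩) ↔ j.val = 0 := by
  rw [ghinge_adj_iff]
  show _ ↔ _
  rw [gu, relB_lr, relB_rl]
  simp

lemma adj_w_v (l : Fin n) (j : Fin (k l - 2)) :
    (GHinge n k).Adj (gw n k) (Sum.inr ⟨l, j⟩) ↔ j.val = k l - 3 := by
  rw [ghinge_adj_iff]
  rw [gw, relB_lr, relB_rl]
  simp

lemma adj_v_v (l : Fin n) (j : Fin (k l - 2)) (p : Σ m : Fin n, Fin (k m - 2)) :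
    (GHinge n k).Adj (gv n k l j) (Sum.inr p) ↔
      p.1 = l ∧ (p.2.val = j.val + 1 ∨ j.val = p.2.val + 1) := by
  rw [ghinge_adj_iff]
  have h1 : gHingeRelB n k (gv n k l j) (Sum.inr p)
      = (l == p.1 && (p.2.val == j.val + 1)) := rfl
  have h2 : gHingeRelB n k (Sum.inr p) (gv n k l j)
      = (p.1 == l && (j.val == p.2.val + 1)) := rfl
  rw [h1, h2]
  simp only [Bool.and_eq_true, beq_iff_eq]
  constructor
  · rintro ⟨hne, ⟨h0, h⟩ | ⟨h0, h⟩⟩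
    · exact ⟨h0.symm, Or.inl h⟩
    · exact ⟨h0, Or.inr h⟩
  · rintro ⟨h0, h⟩
    refine ⟨?_, ?_⟩
    · obtain ⟨l', j'⟩ := p
      simp only at h0 h
      subst h0
      intro hc
      simp only [gv, Sum.inr.injEq] at hc
      obtain ⟨-, hj⟩ := Sigma.mk.inj_iff.mp hc
      rw [heq_eq_eq] at hj
      subst hj
      omega
    · rcases h with h | h
      · exact Or.inl ⟨h0.symm, h⟩
      · exact Or.inr ⟨h0, h⟩

lemma lap_eq_sum {V : Type*} [Fintype V] [DecidableEq V] (G : SimpleGraph V)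
    [DecidableRel G.Adj] (x : V → ℤ) (v : V) :
    (G.lapMatrix ℤ *ᵥ x) v = ∑ y, if G.Adj v y then x v - x y else 0 := by
  have h1 : ∑ y, (if G.Adj v y then x v - x y else 0) =
      ∑ y ∈ G.neighborFinset v, (x v - x y) := by
    rw [SimpleGraph.neighborFinset_eq_filter, Finset.sum_filter]
  rw [SimpleGraph.lapMatrix_mulVec_apply, h1, Finset.sum_sub_distrib, Finset.sum_const,
    SimpleGraph.degree, nsmul_eq_mul]

/-- Extended path values. -/
def hext (x : GHingeVertex n k → ℤ) (l : Fin n) (j : ℕ) : ℤ :=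
  if _ : j = 0 then x (gu n k) else if h : j < k l - 1 then x (gv n k l ⟨j - 1, by omega⟩)
  else x (gw n k)

end HingeAux

section HingeAux2
set_option maxHeartbeats 1000000
open Matrix
variable {n : ℕ} {k : Fin n → ℕ}

lemma hext_zero (x : GHingeVertex n k → ℤ) (l : Fin n) : hext x l 0 = x (gu n k) := by
  simp [hext]

lemma hext_of_lt (x : GHingeVertex n k → ℤ) (l : Fin n) (j : ℕ) (h1 : j ≠ 0)
    (h2 : j < k l - 1) : hext x l j = x (gv n k l ⟨j - 1, by omega⟩) := by
  simp [hext, h1, h2]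

lemma hext_last (x : GHingeVertex n k → ℤ) (l : Fin n) (j : ℕ) (h1 : j ≠ 0)
    (h2 : ¬ j < k l - 1) : hext x l j = x (gw n k) := by
  simp [hext, h1, h2]

lemma sum_sigma_collapse {f : (Σ m : Fin n, Fin (k m - 2)) → ℤ} (l : Fin n)
    (P : (l' : Fin n) → Fin (k l' - 2) → Prop) [∀ l' j', Decidable (P l' j')] :
    (∑ p : Σ m : Fin n, Fin (k m - 2), if p.1 = l ∧ P p.1 p.2 then f p else 0) =
      ∑ j' : Fin (k l - 2), if P l j' then f ⟨l, j'⟩ else 0 := by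
  rw [← Finset.univ_sigma_univ, Finset.sum_sigma]
  have hstep : ∀ l' : Fin n,
      (∑ j' : Fin (k l' - 2), if l' = l ∧ P l' j' then f ⟨l', j'⟩ else 0) =
      if l' = l then (∑ j' : Fin (k l' - 2), if P l' j' then f ⟨l', j'⟩ else 0) else 0 := by
    intro l'
    by_cases h : l' = l
    · subst h; simp
    · simp [h]
  simp_rw [hstep]
  rw [Finset.sum_ite_eq' Finset.univ l]
  simp

lemma lap_gu (hk : ∀ i, 3 ≤ k i) (x : GHingeVertex n k → ℤ) :
    ((GHinge n k).lapMatrix ℤ *ᵥ x) (gu n k) =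
      (x (gu n k) - x (gw n k)) + ∑ l, (x (gu n k) - hext x l 1) := by
  rw [lap_eq_sum, Fintype.sum_sum_type]
  have h2 : (∑ a : Fin 2, if (GHinge n k).Adj (gu n k) (Sum.inl a) then
      x (gu n k) - x (Sum.inl a) else 0) = x (gu n k) - x (gw n k) := by
    rw [Fin.sum_univ_two]
    rw [if_neg (by exact (GHinge n k).irrefl), if_pos (by exact adj_u_w)]
    simp [gw]
  have h3 : (∑ p : Σ m : Fin n, Fin (k m - 2),
      if (GHinge n k).Adj (gu n k) (Sum.inr p) then x (gu n k) - x (Sum.inr p) else 0) =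
      ∑ l, (x (gu n k) - hext x l 1) := by
    rw [← Finset.univ_sigma_univ, Finset.sum_sigma]
    refine Finset.sum_congr rfl fun l _ => ?_
    have hpos : 0 < k l - 2 := by have := hk l; omega
    have hcond : ∀ j : Fin (k l - 2),
        ((GHinge n k).Adj (gu n k) (Sum.inr ⟨l, j⟩)) = (j = ⟨0, hpos⟩) := by
      intro j
      rw [adj_u_v]
      simp [Fin.ext_iff]
    simp_rw [hcond]
    rw [Finset.sum_ite_eq' Finset.univ]
    rw [hext_of_lt x l 1 one_ne_zero (by have := hk l; omega)]
    simp [gv]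
  rw [h2, h3]


lemma lap_gw (hk : ∀ i, 3 ≤ k i) (x : GHingeVertex n k → ℤ) :
    ((GHinge n k).lapMatrix ℤ *ᵥ x) (gw n k) =
      (x (gw n k) - x (gu n k)) + ∑ l, (x (gw n k) - hext x l (k l - 2)) := by
  rw [lap_eq_sum, Fintype.sum_sum_type]
  have h2 : (∑ a : Fin 2, if (GHinge n k).Adj (gw n k) (Sum.inl a) then
      x (gw n k) - x (Sum.inl a) else 0) = x (gw n k) - x (gu n k) := by
    rw [Fin.sum_univ_two]
    rw [if_pos (by exact adj_u_w.symm), if_neg (by exact (GHinge n k).irrefl)]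
    simp [gu]
  have h3 : (∑ p : Σ m : Fin n, Fin (k m - 2),
      if (GHinge n k).Adj (gw n k) (Sum.inr p) then x (gw n k) - x (Sum.inr p) else 0) =
      ∑ l, (x (gw n k) - hext x l (k l - 2)) := by
    rw [← Finset.univ_sigma_univ, Finset.sum_sigma]
    refine Finset.sum_congr rfl fun l _ => ?_
    have hpos : k l - 3 < k l - 2 := by have := hk l; omega
    have hcond : ∀ j : Fin (k l - 2),
        ((GHinge n k).Adj (gw n k) (Sum.inr ⟨l, j⟩)) = (j = ⟨k l - 3, hpos⟩) := by
      intro j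
      rw [adj_w_v]
      simp [Fin.ext_iff]
    simp_rw [hcond]
    rw [Finset.sum_ite_eq' Finset.univ]
    rw [hext_of_lt x l (k l - 2) (by have := hk l; omega) (by have := hk l; omega)]
    have : k l - 2 - 1 = k l - 3 := by omega
    simp [gv, this]
  rw [h2, h3]

lemma lap_gv (hk : ∀ i, 3 ≤ k i) (x : GHingeVertex n k → ℤ) (l : Fin n)
    (j : Fin (k l - 2)) :
    ((GHinge n k).lapMatrix ℤ *ᵥ x) (gv n k l j) =
      (hext x l (j.val + 1) - hext x l j.val) +
        (hext x l (j.val + 1) - hext x l (j.val + 2)) := by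
  have hkl := hk l
  have hjlt := j.isLt
  have hxv : x (gv n k l j) = hext x l (j.val + 1) := by
    rw [hext_of_lt x l (j.val + 1) (by omega) (by omega)]
    simp
  rw [lap_eq_sum, Fintype.sum_sum_type]
  have h2 : (∑ a : Fin 2, if (GHinge n k).Adj (gv n k l j) (Sum.inl a) then
      x (gv n k l j) - x (Sum.inl a) else 0) =
      (if j.val = 0 then x (gv n k l j) - x (gu n k) else 0) +
      (if j.val = k l - 3 then x (gv n k l j) - x (gw n k) else 0) := by
    rw [Fin.sum_univ_two]
    congr 1
    · have : (GHinge n k).Adj (gv n k l j) (Sum.inl 0) ↔ j.val = 0 := by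
        rw [show (Sum.inl 0 : GHingeVertex n k) = gu n k from rfl, (GHinge n k).adj_comm,
          show gv n k l j = Sum.inr ⟨l, j⟩ from rfl, adj_u_v]
      simp only [this, gu]
    · have : (GHinge n k).Adj (gv n k l j) (Sum.inl 1) ↔ j.val = k l - 3 := by
        rw [show (Sum.inl 1 : GHingeVertex n k) = gw n k from rfl, (GHinge n k).adj_comm,
          show gv n k l j = Sum.inr ⟨l, j⟩ from rfl, adj_w_v]
      simp only [this, gw]
  have h3 : (∑ p : Σ m : Fin n, Fin (k m - 2),
      if (GHinge n k).Adj (gv n k l j) (Sum.inr p) then x (gv n k l j) - x (Sum.inr p) else 0) =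
      (if hc : j.val + 1 < k l - 2 then
          x (gv n k l j) - x (gv n k l ⟨j.val + 1, hc⟩) else 0) +
      (if hc : j.val ≠ 0 then
          x (gv n k l j) - x (gv n k l ⟨j.val - 1, by omega⟩) else 0) := by
    have hsplit : ∀ p : Σ m : Fin n, Fin (k m - 2),
        (if (GHinge n k).Adj (gv n k l j) (Sum.inr p) then x (gv n k l j) - x (Sum.inr p)
          else 0) =
        (if p.1 = l ∧ (p.2.val = j.val + 1) then x (gv n k l j) - x (Sum.inr p) else 0) +
        (if p.1 = l ∧ (j.val = p.2.val + 1) then x (gv n k l j) - x (Sum.inr p) else 0) := by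
      intro p
      simp only [adj_v_v l j p]
      by_cases h1 : p.1 = l ∧ p.2.val = j.val + 1
      · obtain ⟨h1a, h1b⟩ := h1
        rw [if_pos (⟨h1a, Or.inl h1b⟩ : p.1 = l ∧ (p.2.val = j.val + 1 ∨ j.val = p.2.val + 1)),
          if_pos (⟨h1a, h1b⟩ : p.1 = l ∧ p.2.val = j.val + 1),
          if_neg (by rintro ⟨-, hc⟩; omega), add_zero]
      · by_cases h2 : p.1 = l ∧ j.val = p.2.val + 1
        · rw [if_pos h2, if_pos ⟨h2.1, Or.inr h2.2⟩, if_neg h1, zero_add]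
        · rw [if_neg h1, if_neg h2, if_neg (by tauto), add_zero]
    refine Eq.trans (Finset.sum_congr rfl fun p _ => hsplit p) ?_
    rw [Finset.sum_add_distrib]
    congr 1
    · rw [sum_sigma_collapse l (fun l' j' => j'.val = j.val + 1)]
      by_cases hc : j.val + 1 < k l - 2
      · have hcond : ∀ j' : Fin (k l - 2), ((j' : ℕ) = j.val + 1) = (j' = ⟨j.val + 1, hc⟩) := by
          intro j'; simp [Fin.ext_iff]
        simp_rw [hcond]
        rw [Finset.sum_ite_eq' Finset.univ, dif_pos hc]
        simp [gv]
      · rw [dif_neg hc]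
        refine Finset.sum_eq_zero fun j' _ => if_neg (by have := j'.isLt; omega)
    · rw [sum_sigma_collapse l (fun l' j' => j.val = j'.val + 1)]
      by_cases hc : j.val ≠ 0
      · have hlt : j.val - 1 < k l - 2 := by omega
        have hcond : ∀ j' : Fin (k l - 2), ((j : ℕ) = j'.val + 1) = (j' = ⟨j.val - 1, hlt⟩) := by
          intro j'; simp [Fin.ext_iff]; omega
        simp_rw [hcond]
        rw [Finset.sum_ite_eq' Finset.univ, dif_pos hc]
        simp [gv]
      · rw [dif_neg hc]
        refine Finset.sum_eq_zero fun j' _ => if_neg (by omega)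
  rw [h2, h3, hxv]
  have hprev : (if j.val = 0 then hext x l (j.val + 1) - x (gu n k) else 0) +
      (if hc : j.val ≠ 0 then
        hext x l (j.val + 1) - x (gv n k l ⟨j.val - 1, by omega⟩) else 0) =
      hext x l (j.val + 1) - hext x l j.val := by
    by_cases h0 : j.val = 0
    · simp [h0, hext_zero]
    · rw [if_neg h0, dif_pos h0, hext_of_lt x l j.val h0 (by omega)]
      simp
  have hnext : (if j.val = k l - 3 then hext x l (j.val + 1) - x (gw n k) else 0) +
      (if hc : j.val + 1 < k l - 2 then
        hext x l (j.val + 1) - x (gv n k l ⟨j.val + 1, hc⟩) else 0) =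
      hext x l (j.val + 1) - hext x l (j.val + 2) := by
    by_cases h0 : j.val = k l - 3
    · have hc1 : ¬ (j.val + 1 < k l - 2) := by omega
      rw [if_pos h0, dif_neg hc1, hext_last x l (j.val + 2) (by omega) (by omega)]
      ring
    · have hc1 : j.val + 1 < k l - 2 := by omega
      rw [if_neg h0, dif_pos hc1, hext_of_lt x l (j.val + 2) (by omega) (by omega)]
      simp
  rw [← hprev, ← hnext]
  ring

end HingeAux2

section HingeMain
set_option maxHeartbeats 1000000
open Matrix Finset
variable {n : ℕ} {k : Fin n → ℕ}

lemma pointDiff_at_gu (h0 : 0 < k i - 2) :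
    pointDiff (gu n k) (gv n k i ⟨0, h0⟩) (gu n k) = 1 := by
  simp [pointDiff, gu, gv]

lemma pointDiff_at_gw (h0 : 0 < k i - 2) :
    pointDiff (gu n k) (gv n k i ⟨0, h0⟩) (gw n k) = 0 := by
  simp [pointDiff, gu, gv, gw]

lemma gv_eq_iff (l i : Fin n) (j : Fin (k l - 2)) (j' : Fin (k i - 2)) :
    gv n k l j = gv n k i j' ↔ l = i ∧ j.val = j'.val := by
  constructor
  · intro h
    simp only [gv, Sum.inr.injEq] at h
    obtain ⟨h1, h2⟩ := Sigma.mk.inj_iff.mp h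
    subst h1
    rw [heq_eq_eq] at h2
    exact ⟨rfl, by rw [h2]⟩
  · rintro ⟨rfl, hval⟩
    rw [Fin.ext hval]

lemma pointDiff_at_gv {i : Fin n} (h0 : 0 < k i - 2) (l : Fin n) (j : Fin (k l - 2)) :
    pointDiff (gu n k) (gv n k i ⟨0, h0⟩) (gv n k l j) =
      if l = i ∧ j.val = 0 then -1 else 0 := by
  rw [pointDiff, if_neg (by simp [gv, gu])]
  by_cases h : l = i ∧ j.val = 0
  · rw [if_pos ((gv_eq_iff l i j ⟨0, h0⟩).mpr ⟨h.1, h.2⟩), if_pos h]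
    ring
  · rw [if_neg (fun hc => h ⟨((gv_eq_iff l i j ⟨0, h0⟩).mp hc).1,
      ((gv_eq_iff l i j ⟨0, h0⟩).mp hc).2⟩), if_neg h]
    ring

lemma erase_lcm_eq {i : Fin n} (b : ℕ) (hb : b = Finset.univ.lcm (fun l => k l - 1))
    (hij : ∃ j, j ≠ i ∧ (k i - 1) ∣ (k j - 1)) :
    ((Finset.univ.erase i).lcm (fun l => k l - 1)) = b := by
  rw [hb]
  apply Nat.dvd_antisymm
  · exact Finset.lcm_dvd fun l _ => Finset.dvd_lcm (Finset.mem_univ l)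
  · refine Finset.lcm_dvd fun l _ => ?_
    by_cases hl : l = i
    · subst hl
      obtain ⟨j, hji, hdvd⟩ := hij
      exact hdvd.trans (Finset.dvd_lcm (Finset.mem_erase.mpr ⟨hji, Finset.mem_univ j⟩))
    · exact Finset.dvd_lcm (Finset.mem_erase.mpr ⟨hl, Finset.mem_univ l⟩)

lemma dvd_of_lap_eq (hk : ∀ l, 3 ≤ k l) (i : Fin n) (b : ℕ)
    (hb : b = Finset.univ.lcm (fun l => k l - 1))
    (hij : ∃ j, j ≠ i ∧ (k i - 1) ∣ (k j - 1)) (h0 : 0 < k i - 2)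
    (t : ℤ) (y : GHingeVertex n k → ℤ)
    (hy : (GHinge n k).lapMatrix ℤ *ᵥ y =
      fun v => t * pointDiff (gu n k) (gv n k i ⟨0, h0⟩) v) :
    (((k i - 1) * (b + ∑ l, b / (k l - 1)) : ℕ) : ℤ) ∣ t := by
  have hbdvd : ∀ l, (k l - 1) ∣ b := fun l => hb ▸ Finset.dvd_lcm (Finset.mem_univ l)
  set c : Fin n → ℤ := fun l => ((k l - 1 : ℕ) : ℤ) with hc
  set q : Fin n → ℤ := fun l => ((b / (k l - 1) : ℕ) : ℤ) with hq
  have hcq : ∀ l, c l * q l = (b : ℤ) := by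
    intro l
    rw [hc, hq]
    rw [← Nat.cast_mul, Nat.mul_div_cancel' (hbdvd l)]
  have hc0 : ∀ l, c l ≠ 0 := fun l => Int.natCast_ne_zero.mpr (by have := hk l; omega)
  -- vertex equations
  have eqv : ∀ (l : Fin n) (j : Fin (k l - 2)),
      (hext y l (j.val + 1) - hext y l j.val) + (hext y l (j.val + 1) - hext y l (j.val + 2))
        = if l = i ∧ j.val = 0 then -t else 0 := by
    intro l j
    have h := congrFun hy (gv n k l j)
    rw [lap_gv hk y l j, pointDiff_at_gv h0 l j] at h
    rw [h]
    by_cases hli : l = i ∧ j.val = 0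
    · rw [if_pos hli, if_pos hli]; ring
    · rw [if_neg hli, if_neg hli]; ring
  have equ : (y (gu n k) - y (gw n k)) + (∑ l, (y (gu n k) - hext y l 1)) = t := by
    have h := congrFun hy (gu n k)
    rw [lap_gu hk y, pointDiff_at_gu h0] at h
    rw [h]; ring
  -- constant second differences
  have hdiff : ∀ (l : Fin n) (j : ℕ), 2 ≤ j → j ≤ k l - 1 →
      hext y l j - hext y l (j - 1) = hext y l 2 - hext y l 1 := by
    intro l j
    induction j with
    | zero => omega
    | succ j ih =>
      intro h2 hle
      rcases Nat.lt_or_ge j 2 with hj | hj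
      · have hj1 : j = 1 := by omega
        subst hj1
        norm_num
      · have hidx : j - 1 < k l - 2 := by have := hk l; omega
        have he := eqv l ⟨j - 1, hidx⟩
        rw [if_neg (by rintro ⟨-, hz⟩; simp at hz; omega)] at he
        simp only [Fin.val_mk] at he ⊢
        have e1 : j - 1 + 1 = j := by omega
        have e2 : j - 1 + 2 = j + 1 := by omega
        rw [e1, e2] at he
        have ih' := ih hj (by omega)
        have e3 : j + 1 - 1 = j := by omega
        rw [e3]
        linarith
  have htel : ∀ (l : Fin n) (j : ℕ), 1 ≤ j → j ≤ k l - 1 →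
      hext y l j = hext y l 1 + ((j : ℤ) - 1) * (hext y l 2 - hext y l 1) := by
    intro l j
    induction j with
    | zero => omega
    | succ j ih =>
      intro h1 hle
      rcases Nat.lt_or_ge j 1 with hj | hj
      · have : j = 0 := by omega
        subst this
        push_cast; ring
      · have hd := hdiff l (j + 1) (by omega) hle
        rw [Nat.add_sub_cancel] at hd
        have ih' := ih hj (by omega)
        push_cast
        push_cast at ih'
        linarith
  -- drops
  set δ : Fin n → ℤ := fun l => hext y l 1 - y (gu n k) with hδ
  set γg : Fin n → ℤ := fun l => hext y l 2 - hext y l 1 with hγ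
  have hw_val : ∀ l : Fin n, hext y l (k l - 1) = y (gw n k) := fun l =>
    hext_last y l (k l - 1) (by have := hk l; omega) (by omega)
  have hu_val : ∀ l : Fin n, hext y l 0 = y (gu n k) := fun l => hext_zero y l
  have hDw : ∀ l : Fin n, y (gw n k) - y (gu n k) = δ l + (c l - 1) * γg l := by
    intro l
    have h := htel l (k l - 1) (by have := hk l; omega) le_rfl
    rw [hw_val l] at h
    have hcast : ((k l - 1 : ℕ) : ℤ) = c l := rfl
    rw [hcast] at h
    rw [hδ, hγ]
    simp only
    linarith [h]
  have hstraight : ∀ l, l ≠ i → γg l = δ l := by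
    intro l hl
    have hlt : 0 < k l - 2 := by have := hk l; omega
    have he := eqv l ⟨0, hlt⟩
    rw [if_neg (by tauto)] at he
    simp only [Fin.val_mk] at he
    norm_num at he
    rw [hu_val l] at he
    rw [hδ, hγ]
    simp only
    linarith
  have hbend : γg i = δ i + t := by
    have he := eqv i ⟨0, h0⟩
    rw [if_pos ⟨rfl, rfl⟩] at he
    simp only [Fin.val_mk] at he
    norm_num at he
    rw [hu_val i] at he
    rw [hδ, hγ]
    simp only
    linarith
  -- divisibility of the drop yw - yu
  have hbDw : (b : ℤ) ∣ (y (gw n k) - y (gu n k)) := by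
    have hnat : ∀ l ∈ Finset.univ.erase i, (k l - 1) ∣ (y (gw n k) - y (gu n k)).natAbs := by
      intro l hl
      have hl' : l ≠ i := (Finset.mem_erase.mp hl).1
      rw [← Int.natCast_dvd]
      refine ⟨δ l, ?_⟩
      have h1 := hDw l
      rw [hstraight l hl'] at h1
      have hcast : ((k l - 1 : ℕ) : ℤ) = c l := rfl
      rw [hcast]
      linear_combination h1
    have := Finset.lcm_dvd hnat
    rw [erase_lcm_eq b hb hij] at this
    rw [← Int.natAbs_dvd_natAbs]
    simpa using this
  obtain ⟨e, he⟩ := hbDw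
  have hδe : ∀ l, l ≠ i → δ l = q l * e := by
    intro l hl
    apply mul_left_cancel₀ (hc0 l)
    have h1 := hDw l
    rw [hstraight l hl] at h1
    have h2 : c l * (q l * e) = (b : ℤ) * e := by rw [← mul_assoc, hcq l]
    rw [h2, ← he]
    linear_combination -h1
  -- the u-equation in terms of δ
  have hsum : ∑ l, (y (gu n k) - hext y l 1) = -∑ l, δ l := by
    rw [← Finset.sum_neg_distrib]
    refine Finset.sum_congr rfl fun l _ => ?_
    rw [hδ]; simp only; ring
  have equ' : -(y (gw n k) - y (gu n k)) - ∑ l, δ l = t := by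
    rw [← equ, hsum]; ring
  have hsplit : ∑ l, δ l = (∑ l ∈ Finset.univ.erase i, q l) * e + δ i := by
    rw [← Finset.sum_erase_add _ _ (Finset.mem_univ i), Finset.sum_mul]
    congr 1
    exact Finset.sum_congr rfl fun l hl => hδe l (Finset.mem_erase.mp hl).1
  set S' : ℤ := ∑ l ∈ Finset.univ.erase i, q l with hS'
  -- final algebra
  have hm : (((k i - 1) * (b + ∑ l, b / (k l - 1)) : ℕ) : ℤ)
      = c i * ((b : ℤ) + (S' + q i)) := by
    rw [Nat.cast_mul, Nat.cast_add, Nat.cast_sum, hS']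
    rw [← Finset.sum_erase_add _ _ (Finset.mem_univ i)]
  refine ⟨-e, ?_⟩
  rw [hm]
  have E1 : -(y (gw n k) - y (gu n k)) - (S' * e + δ i) = t := by
    rw [← equ', hsplit]
  have E2 : c i * δ i = (y (gw n k) - y (gu n k)) - (c i - 1) * t := by
    have h1 := hDw i
    rw [hbend] at h1
    linear_combination -h1
  linear_combination (-(c i)) * E1 - E2 - (c i + 1) * he + e * hcq i

end HingeMain

section HingeConstr
set_option maxHeartbeats 1000000
open Matrix Finset
variable {n : ℕ} {k : Fin n → ℕ}

lemma exists_lap_eq (hk : ∀ l, 3 ≤ k l) (i : Fin n) (b : ℕ)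
    (hb : b = Finset.univ.lcm (fun l => k l - 1)) (h0 : 0 < k i - 2) :
    ∃ x₀ : GHingeVertex n k → ℤ, (GHinge n k).lapMatrix ℤ *ᵥ x₀ =
      fun v => (((k i - 1) * (b + ∑ l, b / (k l - 1)) : ℕ) : ℤ) *
        pointDiff (gu n k) (gv n k i ⟨0, h0⟩) v := by
  have hbdvd : ∀ l, (k l - 1) ∣ b := fun l => hb ▸ Finset.dvd_lcm (Finset.mem_univ l)
  set c : Fin n → ℤ := fun l => ((k l - 1 : ℕ) : ℤ) with hc
  set q : Fin n → ℤ := fun l => ((b / (k l - 1) : ℕ) : ℤ) with hq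
  have hcq : ∀ l, c l * q l = (b : ℤ) := by
    intro l
    rw [hc, hq, ← Nat.cast_mul, Nat.mul_div_cancel' (hbdvd l)]
  set S' : ℤ := ∑ l ∈ Finset.univ.erase i, q l with hS'
  set M : ℤ := c i * ((b : ℤ) + (S' + q i)) with hM
  set F : Fin n → ℕ → ℤ := fun l j => if l = i then
      (if j = 0 then 0 else ((b : ℤ) + S' - M) + ((j : ℤ) - 1) * ((b : ℤ) + S'))
      else -(j : ℤ) * q l with hF
  set x₀ : GHingeVertex n k → ℤ := Sum.elim (fun a' => if a' = 0 then 0 else -(b : ℤ))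
      (fun p => F p.1 (p.2.val + 1)) with hx₀
  have hmM : (((k i - 1) * (b + ∑ l, b / (k l - 1)) : ℕ) : ℤ) = M := by
    rw [Nat.cast_mul, Nat.cast_add, Nat.cast_sum, hM, hS']
    rw [← Finset.sum_erase_add _ _ (Finset.mem_univ i)]
  have hxu : x₀ (gu n k) = 0 := by simp [hx₀, gu]
  have hxw : x₀ (gw n k) = -(b : ℤ) := by
    rw [hx₀, gw]
    simp
  have hxv : ∀ (l : Fin n) (j : Fin (k l - 2)), x₀ (gv n k l j) = F l (j.val + 1) := by
    intro l j; rw [hx₀, gv]; rfl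
  have hF0 : ∀ l, F l 0 = 0 := by
    intro l
    by_cases h : l = i <;> simp [hF, h]
  have hFlast : ∀ l, F l (k l - 1) = -(b : ℤ) := by
    intro l
    by_cases h : l = i
    · rw [h, hF]
      simp only [eq_self_iff_true, if_true, if_neg (show ¬(k i - 1 = 0) by have := hk i; omega)]
      have hci : ((k i - 1 : ℕ) : ℤ) = c i := rfl
      rw [hci]
      linear_combination (-1 : ℤ) * hM - hcq i
    · rw [hF]
      simp only [if_neg h]
      have hci : ((k l - 1 : ℕ) : ℤ) = c l := rfl
      rw [hci]
      linear_combination -hcq l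
  have hextF : ∀ (l : Fin n) (j : ℕ), j ≤ k l - 1 → hext x₀ l j = F l j := by
    intro l j hj
    rcases Nat.eq_zero_or_pos j with rfl | hjpos
    · rw [hext_zero, hxu, hF0]
    · by_cases hlt : j < k l - 1
      · rw [hext_of_lt x₀ l j (by omega) hlt, hxv]
        congr 1
        show j - 1 + 1 = j
        omega
      · have hje : j = k l - 1 := by omega
        subst hje
        rw [hext_last x₀ l (k l - 1) (by omega) hlt, hxw, hFlast]
  refine ⟨x₀, ?_⟩
  funext v
  rw [hmM]
  cases v with
  | inl a' =>
    have ha' : a' = 0 ∨ a' = 1 := by omega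
    rcases ha' with rfl | rfl
    · -- vertex u
      rw [show (Sum.inl 0 : GHingeVertex n k) = gu n k from rfl, lap_gu hk x₀,
        pointDiff_at_gu h0, hxu, hxw]
      have hsum : ∑ l, ((0 : ℤ) - hext x₀ l 1) = ∑ l, (0 - F l 1) :=
        Finset.sum_congr rfl fun l _ => by rw [hextF l 1 (by have := hk l; omega)]
      rw [hsum, ← Finset.sum_erase_add _ _ (Finset.mem_univ i),
        Finset.sum_congr rfl (fun l hl => show (0 : ℤ) - F l 1 = q l by
          rw [hF]
          simp only [if_neg (Finset.mem_erase.mp hl).1]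
          push_cast
          ring)]
      rw [hF]
      simp only [eq_self_iff_true, if_true, if_neg one_ne_zero]
      rw [← hS']
      push_cast
      ring
    · -- vertex w
      rw [show (Sum.inl 1 : GHingeVertex n k) = gw n k from rfl, lap_gw hk x₀,
        pointDiff_at_gw h0, hxu, hxw]
      have hsum : ∑ l, (-(b : ℤ) - hext x₀ l (k l - 2)) = ∑ l, (-(b : ℤ) - F l (k l - 2)) :=
        Finset.sum_congr rfl fun l _ => by rw [hextF l (k l - 2) (by omega)]
      rw [hsum, ← Finset.sum_erase_add _ _ (Finset.mem_univ i),
        Finset.sum_congr rfl (fun l hl => show -(b : ℤ) - F l (k l - 2) = -q l by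
          rw [hF]
          simp only [if_neg (Finset.mem_erase.mp hl).1]
          have hc2 : ((k l - 2 : ℕ) : ℤ) = c l - 1 := by
            rw [hc]; simp only; have := hk l; omega
          rw [hc2]
          linear_combination hcq l)]
      rw [Finset.sum_neg_distrib, ← hS', hF]
      simp only [eq_self_iff_true, if_true, if_neg (show ¬(k i - 2 = 0) by omega)]
      have hc2 : ((k i - 2 : ℕ) : ℤ) = c i - 1 := by
        rw [hc]; simp only; have := hk i; omega
      rw [hc2]
      linear_combination hM + hcq i
  | inr p =>
    obtain ⟨l, j⟩ := p
    rw [show (Sum.inr ⟨l, j⟩ : GHingeVertex n k) = gv n k l j from rfl, lap_gv hk x₀,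
      pointDiff_at_gv h0 l j]
    have hjlt := j.isLt
    have hkl := hk l
    rw [hextF l (j.val + 1) (by omega), hextF l j.val (by omega),
      hextF l (j.val + 2) (by omega)]
    by_cases hli : l = i
    · subst hli
      by_cases hj0 : j.val = 0
      · rw [if_pos ⟨rfl, hj0⟩, hj0, hF]
        simp only [eq_self_iff_true, if_true]
        norm_num
        ring
      · rw [if_neg (by tauto), hF]
        simp only [eq_self_iff_true, if_true, if_neg hj0,
          if_neg (show ¬(j.val + 1 = 0) by omega), if_neg (show ¬(j.val + 2 = 0) by omega)]
        push_cast
        ring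
    · rw [if_neg (by tauto), hF]
      simp only [if_neg hli]
      push_cast
      ring

end HingeConstr

/-- For `n ≥ 2` and `k₁, …, kₙ ≥ 3`, with `b = lcm(k₁-1, …, kₙ-1)`, and an
index `i` such that `(k_i - 1) ∣ (k_j - 1)` for some `j ≠ i`, the class of the divisor `ε_i`
(value `1` at `u`, `-1` at `v_{i,1}`, `0` elsewhere) in the critical group of
`H_{k₁-1,…,kₙ-1}` has additive order exactly `(k_i - 1) * (b + ∑ l, b / (k_l - 1))`. -/
theorem gHinge_epsilon_addOrderOf (n : ℕ) (hn : 2 ≤ n) (k : Fin n → ℕ) (hk : ∀ i, 3 ≤ k i)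
    (b : ℕ) (hb : b = Finset.univ.lcm (fun i => k i - 1))
    (i : Fin n) (hij : ∃ j, j ≠ i ∧ (k i - 1) ∣ (k j - 1)) :
    addOrderOf (divisorClass (GHinge n k)
      (pointDiff (gu n k) (gv n k i ⟨0, by have := hk i; omega⟩))
      (pointDiff_mem _ _)) =
      (k i - 1) * (b + ∑ l, b / (k l - 1)) := by
  classical
  have h0 : 0 < k i - 2 := by have := hk i; omega
  show addOrderOf (divisorClass (GHinge n k)
      (pointDiff (gu n k) (gv n k i ⟨0, h0⟩)) (pointDiff_mem _ _)) = _
  have key : ∀ t : ℕ,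
      (t • (divisorClass (GHinge n k) (pointDiff (gu n k) (gv n k i ⟨0, h0⟩))
        (pointDiff_mem _ _)) = 0) ↔
      ∃ y : GHingeVertex n k → ℤ, Matrix.mulVec ((GHinge n k).lapMatrix ℤ) y =
        fun v => (t : ℤ) * pointDiff (gu n k) (gv n k i ⟨0, h0⟩) v := by
    intro t
    show (t • (QuotientAddGroup.mk (⟨pointDiff (gu n k) (gv n k i ⟨0, h0⟩), pointDiff_mem _ _⟩ :
      Div0 (GHingeVertex n k)) : Div0 (GHingeVertex n k) ⧸
        ((Prin (GHinge n k)).addSubgroupOf (Div0 (GHingeVertex n k))))) = 0 ↔ _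
    rw [← QuotientAddGroup.mk_nsmul, QuotientAddGroup.eq_zero_iff,
      AddSubgroup.mem_addSubgroupOf]
    have hcoe : ((t • (⟨pointDiff (gu n k) (gv n k i ⟨0, h0⟩), pointDiff_mem _ _⟩ :
        Div0 (GHingeVertex n k))  : Div0 (GHingeVertex n k)) : GHingeVertex n k → ℤ) =
        fun v => (t : ℤ) * pointDiff (gu n k) (gv n k i ⟨0, h0⟩) v := by
      funext v
      push_cast
      simp [nsmul_eq_mul]
    rw [hcoe, Prin]
    simp only [AddMonoidHom.mem_range, LinearMap.toAddMonoidHom_coe, Matrix.mulVecLin_apply]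
  have h1 : ((k i - 1) * (b + ∑ l, b / (k l - 1))) •
      (divisorClass (GHinge n k) (pointDiff (gu n k) (gv n k i ⟨0, h0⟩))
        (pointDiff_mem _ _)) = 0 := by
    rw [key]
    obtain ⟨x₀, hx₀⟩ := exists_lap_eq hk i b hb h0
    exact ⟨x₀, hx₀⟩
  have h2 : ∀ t : ℕ, (t • (divisorClass (GHinge n k)
      (pointDiff (gu n k) (gv n k i ⟨0, h0⟩)) (pointDiff_mem _ _)) = 0) →
      ((k i - 1) * (b + ∑ l, b / (k l - 1))) ∣ t := by
    intro t ht
    rw [key] at ht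
    obtain ⟨y, hy⟩ := ht
    have := dvd_of_lap_eq hk i b hb hij h0 (t : ℤ) y hy
    exact_mod_cast this
  exact Nat.dvd_antisymm (addOrderOf_dvd_of_nsmul_eq_zero h1)
    (h2 _ (addOrderOf_nsmul_eq_zero _))
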